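/- Let p be a prime, k ≥ 1, and G_{p,k} = C_{p^∞} × C_k × 𝕋. Let C^dis denote the set of infinite discrete closed subgroups of G_{p,k}. Then the closure of C^dis in the Chabauty space C(G_{p,k}) is the union of C^dis with the d(k) subgroups C_{p^∞} × C_d × 𝕋, where d ranges over the positive divisors of k. -/

import Mathlib

/-- The subgroup `C_n` of `n`-th roots of unity in the circle group `𝕋`. -/
noncomputable def circleRoots (n : ℕ) : Subgroup Circle where
  carrier := {z | z ^ n = 1}
  one_mem' := one_pow n
  mul_mem' := by
    intro a b ha hb
    simp only [Set.mem_setOf_eq] at *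
    rw [mul_pow, ha, hb, mul_one]
  inv_mem' := by
    intro a ha
    simp only [Set.mem_setOf_eq] at *
    rw [inv_pow, ha, inv_one]

/-- The subgroup of all `p`-power roots of unity in the circle group `𝕋`. -/
noncomputable def pruferSubgroup (p : ℕ) : Subgroup Circle where
  carrier := {z | ∃ ℓ : ℕ, z ^ p ^ ℓ = 1}
  one_mem' := ⟨0, one_pow _⟩
  mul_mem' := by
    rintro a b ⟨la, ha⟩ ⟨lb, hb⟩
    refine ⟨la + lb, ?_⟩
    rw [mul_pow, pow_add, pow_mul, ha, one_pow, mul_comm (p ^ la), pow_mul, hb, one_pow,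
      one_mul]
  inv_mem' := by
    rintro a ⟨l, h⟩
    exact ⟨l, by rw [inv_pow, h, inv_one]⟩

/-- The Prüfer `p`-group `C_{p^∞}`: the group of all `p`-power roots of unity in `𝕋`,
endowed with the *discrete* topology. -/
def Prufer (p : ℕ) : Type := ↥(pruferSubgroup p)

noncomputable instance (p : ℕ) : CommGroup (Prufer p) := inferInstanceAs (CommGroup ↥(pruferSubgroup p))

instance (p : ℕ) : TopologicalSpace (Prufer p) := ⊥

instance (p : ℕ) : DiscreteTopology (Prufer p) := ⟨rfl⟩

instance (p : ℕ) : IsTopologicalGroup (Prufer p) where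
  continuous_mul := continuous_of_discreteTopology
  continuous_inv := continuous_of_discreteTopology

/-- The Chabauty space of a topological group `G`: the set of closed subgroups of `G`. -/
def ChabautySpace (G : Type*) [Group G] [TopologicalSpace G] : Type _ :=
  {H : Subgroup G // IsClosed (H : Set G)}

/-- The Chabauty topology on the space of closed subgroups, generated by the sets
`O_K = {H | H ∩ K = ∅}` for `K` compact and `O'_U = {H | H ∩ U ≠ ∅}` for `U` open. -/
instance ChabautySpace.instTopologicalSpace (G : Type*) [Group G] [TopologicalSpace G] :
    TopologicalSpace (ChabautySpace G) :=
  TopologicalSpace.generateFrom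
    ({S | ∃ K : Set G, IsCompact K ∧ S = {H : ChabautySpace G | (H.1 : Set G) ∩ K = ∅}} ∪
     {S | ∃ U : Set G, IsOpen U ∧ S = {H : ChabautySpace G | ((H.1 : Set G) ∩ U).Nonempty}})

section Aux

open Set Subgroup

lemma circle_coe_pow (z : Circle) (n : ℕ) : ((z ^ n : Circle) : ℂ) = (z : ℂ) ^ n :=
  map_pow Circle.coeHom z n

lemma circle_pow_eq_iff {z : Circle} {n : ℕ} : z ^ n = 1 ↔ (z : ℂ) ^ n = 1 := by
  constructor
  · intro h
    rw [← circle_coe_pow, h, Circle.coe_one]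
  · intro h
    apply Circle.coe_injective
    rw [circle_coe_pow, h, Circle.coe_one]

lemma circle_setOf_pow_image {n : ℕ} (hn : 0 < n) :
    ((↑) : Circle → ℂ) '' {z : Circle | z ^ n = 1} = {c : ℂ | c ^ n = 1} := by
  ext c
  constructor
  · rintro ⟨z, hz, rfl⟩
    exact circle_pow_eq_iff.mp hz
  · intro hc
    have habs : ‖c‖ = 1 := by
      have h1 : ‖c‖ ^ n = 1 := by
        rw [← norm_pow, hc, norm_one]
      rcases lt_trichotomy (‖c‖) 1 with h | h | h
      · exact absurd h1 (by have := pow_lt_one₀ (norm_nonneg c) h hn.ne'; linarith)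
      · exact h
      · exact absurd h1 (by have := one_lt_pow₀ h hn.ne'; linarith)
    refine ⟨⟨c, show c ∈ Metric.sphere (0 : ℂ) 1 from
      mem_sphere_zero_iff_norm.mpr (by rw [habs])⟩, ?_, rfl⟩
    exact circle_pow_eq_iff.mpr hc

lemma circle_setOf_pow_finite {n : ℕ} (hn : 0 < n) : {z : Circle | z ^ n = 1}.Finite := by
  have h2 : {c : ℂ | c ^ n = 1}.Finite := by
    have : {c : ℂ | c ^ n = 1} = ↑(Polynomial.nthRootsFinset n (1 : ℂ)) := by
      ext c; simp [Polynomial.mem_nthRootsFinset hn (1 : ℂ)]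
    rw [this]
    exact (Polynomial.nthRootsFinset n (1 : ℂ)).finite_toSet
  have := h2.subset (circle_setOf_pow_image hn).le
  exact Set.Finite.of_finite_image this (Circle.coe_injective.injOn)

lemma circle_setOf_pow_ncard {n : ℕ} (hn : 0 < n) : {z : Circle | z ^ n = 1}.ncard = n := by
  have h1 : {z : Circle | z ^ n = 1}.ncard
      = (((↑) : Circle → ℂ) '' {z : Circle | z ^ n = 1}).ncard :=
    (Set.ncard_image_of_injective _ Circle.coe_injective).symm
  rw [h1, circle_setOf_pow_image hn]
  have : {c : ℂ | c ^ n = 1} = ↑(Polynomial.nthRootsFinset n (1 : ℂ)) := by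
    ext c; simp [Polynomial.mem_nthRootsFinset hn (1 : ℂ)]
  rw [this, Set.ncard_coe_finset,
    (Complex.isPrimitiveRoot_exp n hn.ne').card_nthRootsFinset]

lemma coe_circleRoots (n : ℕ) : (circleRoots n : Set Circle) = {z : Circle | z ^ n = 1} := rfl

/-- Every finite subgroup of the circle is the group of `d`-th roots of unity, `d` its order. -/
lemma subgroup_circle_finite_eq (S : Subgroup Circle) (h : (S : Set Circle).Finite) :
    0 < Nat.card S ∧ S = circleRoots (Nat.card S) := by
  haveI : Finite ↥S := h.to_subtype
  have hpos : 0 < Nat.card S := Nat.card_pos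
  have hle : S ≤ circleRoots (Nat.card S) := by
    intro x hx
    have h1 : (⟨x, hx⟩ : S) ^ (Nat.card S) = 1 := pow_card_eq_one'
    have h2 := congrArg (Subtype.val) h1
    rw [SubmonoidClass.coe_pow] at h2
    exact h2.trans rfl
  refine ⟨hpos, le_antisymm hle ?_⟩
  have hsets : (S : Set Circle) = (circleRoots (Nat.card S) : Set Circle) := by
    refine Set.eq_of_subset_of_ncard_le hle ?_ (circle_setOf_pow_finite hpos)
    have h1 : (circleRoots (Nat.card S) : Set Circle).ncard = Nat.card S :=
      circle_setOf_pow_ncard hpos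
    have h2 : (S : Set Circle).ncard = Nat.card S := (Nat.card_coe_set_eq _).symm
    rw [h1, h2]
  intro x hx
  have : x ∈ (S : Set Circle) := hsets ▸ hx
  exact this

lemma zpowers_circle_eq {g : Circle} {n : ℕ} (hn : 0 < n) (h : orderOf g = n) :
    Subgroup.zpowers g = circleRoots n := by
  have hfin : ((Subgroup.zpowers g : Subgroup Circle) : Set Circle).Finite := by
    rw [finite_zpowers]
    exact orderOf_pos_iff.mp (h ▸ hn)
  obtain ⟨-, heq⟩ := subgroup_circle_finite_eq _ hfin
  rwa [Nat.card_zpowers, h] at heq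

end Aux

section PruferAux

open Set Subgroup

variable (p : ℕ)

/-- The inclusion of the Prüfer group into the circle. -/
noncomputable def pH : Prufer p →* Circle := (pruferSubgroup p).subtype

lemma pH_injective : Function.Injective (pH p) := Subtype.val_injective

lemma prufer_spec (x : Prufer p) : ∃ ℓ : ℕ, pH p x ^ p ^ ℓ = 1 := x.2

lemma prufer_pow_iff (x : Prufer p) (n : ℕ) : x ^ n = 1 ↔ pH p x ^ n = 1 := by
  rw [← map_pow, ← (pH p).map_one]
  exact ⟨fun h => by rw [(pH p).map_one] at *; exact congrArg _ h,
    fun h => pH_injective p h⟩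

lemma prufer_setOf_pow_eq (n : ℕ) :
    {x : Prufer p | x ^ n = 1} = (pH p) ⁻¹' {z : Circle | z ^ n = 1} := by
  ext x
  simp only [Set.mem_setOf_eq, Set.mem_preimage, prufer_pow_iff]

lemma prufer_setOf_pow_finite {n : ℕ} (hn : 0 < n) : {x : Prufer p | x ^ n = 1}.Finite := by
  rw [prufer_setOf_pow_eq]
  exact (circle_setOf_pow_finite hn).preimage (pH_injective p).injOn

lemma prufer_setOf_pow_ncard_le {n : ℕ} (hn : 0 < n) :
    {x : Prufer p | x ^ n = 1}.ncard ≤ n := by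
  have h1 : {x : Prufer p | x ^ n = 1}.ncard
      = ((pH p) '' {x : Prufer p | x ^ n = 1}).ncard :=
    (Set.ncard_image_of_injective _ (pH_injective p)).symm
  have hsub : (pH p) '' {x : Prufer p | x ^ n = 1} ⊆ {z : Circle | z ^ n = 1} := by
    rintro z ⟨x, hx, rfl⟩
    exact (prufer_pow_iff p x n).mp hx
  calc {x : Prufer p | x ^ n = 1}.ncard
      = ((pH p) '' {x : Prufer p | x ^ n = 1}).ncard := h1
    _ ≤ {z : Circle | z ^ n = 1}.ncard := Set.ncard_le_ncard hsub (circle_setOf_pow_finite hn)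
    _ = n := circle_setOf_pow_ncard hn

lemma prufer_mem_of_pow (z : Circle) (ℓ : ℕ) (hz : z ^ p ^ ℓ = 1) : z ∈ pruferSubgroup p :=
  ⟨ℓ, hz⟩

lemma prufer_infinite (hp : p.Prime) : Infinite (Prufer p) := by
  by_contra hfin
  rw [not_infinite_iff_finite] at hfin
  have hfinset : (pruferSubgroup p : Set Circle).Finite := by
    rw [← Set.finite_coe_iff]
    exact hfin
  set c := (pruferSubgroup p : Set Circle).ncard with hc
  have hsub : {z : Circle | z ^ p ^ c = 1} ⊆ (pruferSubgroup p : Set Circle) := by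
    intro z hz
    exact ⟨c, hz⟩
  have hple : p ^ c ≤ c := by
    have h1 := Set.ncard_le_ncard hsub hfinset
    rwa [circle_setOf_pow_ncard (pow_pos hp.pos c)] at h1
  exact absurd hple (not_le.mpr (Nat.lt_pow_self (n := c) hp.one_lt))

end PruferAux

section PruferMore

open Set Subgroup

variable {p : ℕ}

lemma prufer_subgroup_infinite_eq_top (hp : p.Prime) (S : Subgroup (Prufer p))
    (h : (S : Set (Prufer p)).Infinite) : S = ⊤ := by
  rw [Subgroup.eq_top_iff']
  intro x
  obtain ⟨ℓ, hℓ⟩ := prufer_spec p x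
  have hx : x ^ p ^ ℓ = 1 := (prufer_pow_iff p x _).mpr hℓ
  set Rset : Set (Prufer p) := {y : Prufer p | y ^ p ^ ℓ = 1} with hRset
  have hRfin : Rset.Finite := prufer_setOf_pow_finite p (pow_pos hp.pos ℓ)
  have hex : ∃ y ∈ (S : Set (Prufer p)), y ∉ Rset := by
    by_contra hcon
    push_neg at hcon
    exact h (hRfin.subset hcon)
  obtain ⟨y, hyS, hyR⟩ := hex
  obtain ⟨L, hL⟩ := prufer_spec p y
  have hyL : y ^ p ^ L = 1 := (prufer_pow_iff p y _).mpr hL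
  have hdvd : orderOf y ∣ p ^ L := orderOf_dvd_of_pow_eq_one hyL
  obtain ⟨m, hmL, hm⟩ := (Nat.dvd_prime_pow hp).mp hdvd
  have hℓm : ℓ < m := by
    by_contra hcon
    push_neg at hcon
    apply hyR
    have : orderOf y ∣ p ^ ℓ := hm ▸ pow_dvd_pow p hcon
    exact orderOf_dvd_iff_pow_eq_one.mp this
  set g := y ^ p ^ (m - ℓ) with hg
  have horder : orderOf g = p ^ ℓ := by
    rw [hg, orderOf_pow' y (pow_pos hp.pos (m - ℓ)).ne', hm]
    have hgcd : Nat.gcd (p ^ m) (p ^ (m - ℓ)) = p ^ (m - ℓ) :=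
      Nat.gcd_eq_right (pow_dvd_pow p (Nat.sub_le m ℓ))
    rw [hgcd, Nat.pow_div (Nat.sub_le m ℓ) hp.pos, Nat.sub_sub_self hℓm.le]
  have hzsub : ((Subgroup.zpowers g : Subgroup (Prufer p)) : Set (Prufer p)) ⊆ Rset := by
    rintro z hz
    obtain ⟨j, rfl⟩ := Subgroup.mem_zpowers_iff.mp hz
    show (g ^ j) ^ p ^ ℓ = 1
    rw [← zpow_natCast, ← zpow_mul, mul_comm, zpow_mul, zpow_natCast, ← horder,
      pow_orderOf_eq_one, one_zpow]
  have hzcard : ((Subgroup.zpowers g : Subgroup (Prufer p)) : Set (Prufer p)).ncard = p ^ ℓ := by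
    rw [← Nat.card_coe_set_eq]
    have : Nat.card ↥(Subgroup.zpowers g) = orderOf g := Nat.card_zpowers g
    rw [← horder]
    exact this
  have heq : ((Subgroup.zpowers g : Subgroup (Prufer p)) : Set (Prufer p)) = Rset := by
    refine Set.eq_of_subset_of_ncard_le hzsub ?_ hRfin
    rw [hzcard]
    exact prufer_setOf_pow_ncard_le p (pow_pos hp.pos ℓ)
  have hxg : x ∈ Subgroup.zpowers g := by
    have : x ∈ Rset := hx
    rwa [← heq] at this
  have hgS : Subgroup.zpowers g ≤ S :=
    Subgroup.zpowers_le.mpr (Subgroup.pow_mem S hyS _)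
  exact hgS hxg

lemma circle_pow_root_exists (hp : p.Prime) (t ℓ : ℕ) (z : Circle) (hz : z ^ p ^ ℓ = 1) :
    ∃ w : Circle, w ^ p ^ t = z ∧ w ^ p ^ (ℓ + t) = 1 := by
  set f := (powMonoidHom (p ^ t) : Circle →* Circle) with hf
  set J := (circleRoots (p ^ (ℓ + t))).map f with hJdef
  have hRfin : ((circleRoots (p ^ (ℓ + t)) : Subgroup Circle) : Set Circle).Finite :=
    circle_setOf_pow_finite (pow_pos hp.pos _)
  have hJfin : (J : Set Circle).Finite := by
    rw [hJdef, Subgroup.coe_map]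
    exact hRfin.image _
  obtain ⟨hdpos, hJ⟩ := subgroup_circle_finite_eq J hJfin
  set d := Nat.card J with hd
  -- d divides p ^ (ℓ + t)
  have hcard_dom : Nat.card ↥(circleRoots (p ^ (ℓ + t))) = p ^ (ℓ + t) := by
    have h0 : Nat.card ↥(circleRoots (p ^ (ℓ + t)))
        = Nat.card ↥((circleRoots (p ^ (ℓ + t)) : Subgroup Circle) : Set Circle) := rfl
    rw [h0, Nat.card_coe_set_eq, coe_circleRoots,
      circle_setOf_pow_ncard (pow_pos hp.pos _)]
  have hdvd : d ∣ p ^ (ℓ + t) := by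
    rw [hd, ← hcard_dom]
    exact Subgroup.card_dvd_of_surjective _ (f.subgroupMap_surjective (circleRoots (p ^ (ℓ + t))))
  obtain ⟨s, hs, hds⟩ := (Nat.dvd_prime_pow hp).mp hdvd
  -- p ^ ℓ ≤ d
  have hsub : ((circleRoots (p ^ (ℓ + t)) : Subgroup Circle) : Set Circle)
      ⊆ {z : Circle | z ^ (p ^ t * d) = 1} := by
    intro x hx
    have hmem : f x ∈ J := Subgroup.mem_map_of_mem f hx
    have : f x ∈ circleRoots d := hJ ▸ hmem
    have hfd : (x ^ p ^ t) ^ d = 1 := this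
    show x ^ (p ^ t * d) = 1
    rwa [pow_mul]
  have hle : p ^ ℓ ≤ d := by
    have hptd : 0 < p ^ t * d := Nat.mul_pos (pow_pos hp.pos t) hdpos
    have h1 := Set.ncard_le_ncard hsub (circle_setOf_pow_finite hptd)
    rw [coe_circleRoots, circle_setOf_pow_ncard (pow_pos hp.pos _),
      circle_setOf_pow_ncard hptd] at h1
    rw [pow_add, mul_comm (p ^ ℓ)] at h1
    exact Nat.le_of_mul_le_mul_left h1 (pow_pos hp.pos t)
  -- z ∈ J
  have hzJ : z ∈ J := by
    rw [hJ]
    show z ^ d = 1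
    have hls : ℓ ≤ s := by
      have := hds ▸ hle
      exact (Nat.pow_le_pow_iff_right hp.one_lt).mp this
    rw [hds, ← Nat.add_sub_cancel' hls, pow_add, pow_mul, hz, one_pow]
  obtain ⟨w, hw, hwz⟩ := Subgroup.mem_map.mp hzJ
  exact ⟨w, hwz, hw⟩

lemma prufer_divisible (hp : p.Prime) {n : ℕ} (hn : 0 < n) (a : Prufer p) :
    ∃ b : Prufer p, b ^ n = a := by
  obtain ⟨ℓ, hℓ⟩ := prufer_spec p a
  set t := n.factorization p with ht
  set m := n / p ^ t with hm
  have hfact : p ^ t * m = n := Nat.ordProj_mul_ordCompl_eq_self n p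
  have hcop : Nat.Coprime p m := Nat.coprime_ordCompl hp hn.ne'
  obtain ⟨w, hw1, hw2⟩ := circle_pow_root_exists hp t ℓ (pH p a) hℓ
  set b₀ : Prufer p := ⟨w, ℓ + t, hw2⟩ with hb₀
  have hb₀a : b₀ ^ p ^ t = a := by
    apply pH_injective p
    rw [map_pow]
    exact hw1
  set N := p ^ (ℓ + t + 1) with hN
  have hN1 : 1 < N := Nat.one_lt_pow (Nat.succ_ne_zero _) hp.one_lt
  have hcopN : Nat.Coprime m N := Nat.Coprime.pow_right _ (Nat.coprime_comm.mp hcop)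
  obtain ⟨m', -, hm'⟩ := Nat.exists_mul_mod_eq_one_of_coprime hcopN hN1
  refine ⟨b₀ ^ m', ?_⟩
  have haℓ : a ^ p ^ ℓ = 1 := (prufer_pow_iff p a _).mpr hℓ
  have haN : a ^ N = 1 := by
    have hNe : N = p ^ ℓ * p ^ (t + 1) := by rw [hN, ← pow_add]; ring_nf
    rw [hNe, pow_mul, haℓ, one_pow]
  have key : (b₀ ^ m') ^ n = a ^ (m * m') := by
    rw [← pow_mul, ← hfact]
    rw [show m' * (p ^ t * m) = p ^ t * (m * m') by ring, pow_mul, hb₀a]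
  rw [key]
  have hdm : m * m' = N * (m * m' / N) + 1 := by
    conv_lhs => rw [← Nat.div_add_mod (m * m') N]
    rw [hm']
  rw [hdm, pow_add, pow_mul, haN, one_pow, one_mul, pow_one]

end PruferMore

section CircleTop

open Set Subgroup Real

lemma circle_exp_npow (r : ℝ) (n : ℕ) : Circle.exp r ^ n = Circle.exp (n * r) := by
  induction n with
  | zero => simp
  | succ n ih =>
    rw [pow_succ, ih, ← Circle.exp_add]
    congr 1
    push_cast
    ring

lemma circle_exp_surjective : Function.Surjective (⇑Circle.exp) :=
  fun z => ⟨Complex.arg z, Circle.exp_arg z⟩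

/-- Torsion points are dense in the circle. -/
lemma circle_exists_torsion_near {V : Set Circle} (hV : IsOpen V) {z : Circle} (hz : z ∈ V) :
    ∃ m : ℕ, 0 < m ∧ ∃ w, w ∈ V ∧ w ^ m = 1 := by
  set t := Complex.arg (z : ℂ) with htdef
  have ht : Circle.exp t = z := Circle.exp_arg z
  have hU : IsOpen (⇑Circle.exp ⁻¹' V) := hV.preimage Circle.exp.continuous
  have htU : t ∈ ⇑Circle.exp ⁻¹' V := by
    simp only [Set.mem_preimage, ht]
    exact hz
  obtain ⟨ε, εpos, hball⟩ := Metric.isOpen_iff.mp hU t htU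
  have h2π : (0 : ℝ) < 2 * π := by positivity
  obtain ⟨q, hq⟩ := exists_rat_near (t / (2 * π)) (div_pos εpos h2π)
  refine ⟨q.den, q.den_pos, ⟨Circle.exp (2 * π * q), ?_, ?_⟩⟩
  · apply hball
    rw [Metric.mem_ball, Real.dist_eq]
    have harr : 2 * π * (q : ℝ) - t = -(2 * π) * (t / (2 * π) - q) := by
      field_simp
      ring
    rw [harr, abs_mul, abs_neg, abs_of_pos h2π]
    calc 2 * π * |t / (2 * π) - (q : ℝ)| < 2 * π * (ε / (2 * π)) := by
          exact (mul_lt_mul_iff_right₀ h2π).mpr hq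
      _ = ε := by field_simp
  · rw [circle_exp_npow]
    have hqm : (q.den : ℝ) * (2 * π * q) = 2 * π * (q.num : ℝ) := by
      have : (q : ℝ) * q.den = q.num := by
        rw [Rat.cast_def]
        field_simp
      nlinarith [this]
    rw [hqm]
    exact Circle.exp_two_pi_mul_int q.num

end CircleTop

section DiscreteHelper

open Set Pointwise

/-- If some open set meets a subgroup exactly in `1`, the subgroup is discrete. -/
lemma discreteTopology_of_isOpen_inter {G : Type*} [Group G] [TopologicalSpace G]
    [IsTopologicalGroup G] {H : Subgroup G} {U : Set G} (hU : IsOpen U)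
    (hUH : U ∩ (H : Set G) = {1}) : DiscreteTopology H := by
  rw [discreteTopology_iff_isOpen_singleton]
  intro x
  have hxU : IsOpen ((x : G) • U) := hU.smul (x : G)
  have hkey : (Subtype.val ⁻¹' ((x : G) • U) : Set H) = {x} := by
    ext y
    simp only [Set.mem_preimage, Set.mem_singleton_iff]
    constructor
    · intro hy
      obtain ⟨u, hu, huy⟩ := hy
      have humem : u ∈ U ∩ (H : Set G) := by
        refine ⟨hu, ?_⟩
        have : u = (x : G)⁻¹ * (y : G) := by
          rw [← huy]
          simp [smul_eq_mul]
        rw [this]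
        exact mul_mem (inv_mem x.2) y.2
      rw [hUH] at humem
      apply Subtype.ext
      rw [← huy, humem]
      simp [smul_eq_mul]
    · rintro rfl
      have h1U : (1 : G) ∈ U := by
        have : (1 : G) ∈ U ∩ (H : Set G) := by rw [hUH]; rfl
        exact this.1
      exact ⟨1, h1U, by simp [smul_eq_mul]⟩
  rw [← hkey]
  exact hxU.preimage continuous_subtype_val

end DiscreteHelper

section CircleClosed

open Set Subgroup Real

lemma circle_exp_zpow (r : ℝ) (j : ℤ) : Circle.exp (j * r) = Circle.exp r ^ j := by
  obtain ⟨n, rfl | rfl⟩ := j.eq_nat_or_neg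
  · have h : (((n : ℤ) : ℝ)) * r = (n : ℝ) * r := by push_cast; ring
    rw [h, ← circle_exp_npow, zpow_natCast]
  · rw [Int.cast_neg, Int.cast_natCast, neg_mul, Circle.exp_neg, ← circle_exp_npow,
      zpow_neg, zpow_natCast]

/-- An infinite closed subgroup of the circle is the whole circle. -/
lemma circle_closed_subgroup_infinite_eq_top (N : Subgroup Circle)
    (hc : IsClosed (N : Set Circle)) (hinf : (N : Set Circle).Infinite) : N = ⊤ := by
  -- pull back along `Circle.exp`
  set N' : AddSubgroup ℝ :=
    { carrier := ⇑Circle.exp ⁻¹' (N : Set Circle)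
      zero_mem' := by simp only [Set.mem_preimage, Circle.exp_zero]; exact N.one_mem
      add_mem' := by
        intro a b ha hb
        simp only [Set.mem_preimage, Circle.exp_add] at *
        exact N.mul_mem ha hb
      neg_mem' := by
        intro a ha
        simp only [Set.mem_preimage, Circle.exp_neg] at *
        exact N.inv_mem ha } with hN'def
  rcases N'.dense_or_cyclic with hd | ⟨a, ha⟩
  · -- dense: N is everything
    rw [Subgroup.eq_top_iff']
    intro z
    have h1 : z ∈ _root_.closure (⇑Circle.exp '' (N' : Set ℝ)) := by
      have hz : z ∈ ⇑Circle.exp '' (_root_.closure (N' : Set ℝ)) := by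
        rw [hd.closure_eq]
        rcases circle_exp_surjective z with ⟨r, hr⟩
        exact ⟨r, Set.mem_univ r, hr⟩
      exact image_closure_subset_closure_image Circle.exp.continuous hz
    have h2 : ⇑Circle.exp '' (N' : Set ℝ) ⊆ (N : Set Circle) := by
      rintro w ⟨r, hr, rfl⟩
      exact hr
    have h3 : _root_.closure (⇑Circle.exp '' (N' : Set ℝ)) ⊆ (N : Set Circle) := by
      calc _root_.closure (⇑Circle.exp '' (N' : Set ℝ))
          ⊆ _root_.closure (N : Set Circle) := closure_mono h2
        _ = (N : Set Circle) := hc.closure_eq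
    exact h3 h1
  · -- cyclic: N would be finite, contradiction
    exfalso
    have h2π : (2 * π : ℝ) ∈ N' := by
      show Circle.exp (2 * π) ∈ (N : Set Circle)
      rw [Circle.exp_two_pi]
      exact N.one_mem
    rw [ha] at h2π
    obtain ⟨n₀, hn₀⟩ := AddSubgroup.mem_closure_singleton.mp h2π
    have hn₀0 : n₀ ≠ 0 := by
      rintro rfl
      simp only [zero_smul] at hn₀
      have : (0 : ℝ) < 2 * π := by positivity
      linarith
    have hexpa : Circle.exp a ^ n₀ = 1 := by
      rw [← circle_exp_zpow]
      have : (n₀ : ℝ) * a = n₀ • a := by rw [zsmul_eq_mul]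
      rw [this, hn₀]
      exact Circle.exp_two_pi
    have hfin : IsOfFinOrder (Circle.exp a) := by
      rw [isOfFinOrder_iff_pow_eq_one]
      refine ⟨n₀.natAbs, Int.natAbs_pos.mpr hn₀0, ?_⟩
      rcases Int.natAbs_eq n₀ with he | he
      · rw [← zpow_natCast, ← he, hexpa]
      · rw [← zpow_natCast, ← neg_neg ((n₀.natAbs : ℤ)), ← he, zpow_neg, hexpa, inv_one]
    -- N is contained in the finite set of powers of `exp a`
    have hsub : (N : Set Circle) ⊆ ((Subgroup.zpowers (Circle.exp a)) : Set Circle) := by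
      intro z hzN
      obtain ⟨r, hr⟩ := circle_exp_surjective z
      have hrN' : r ∈ N' := by
        show Circle.exp r ∈ (N : Set Circle)
        rw [hr]
        exact hzN
      rw [ha] at hrN'
      obtain ⟨j, hj⟩ := AddSubgroup.mem_closure_singleton.mp hrN'
      refine ⟨j, ?_⟩
      show Circle.exp a ^ j = z
      rw [← circle_exp_zpow, ← hr]
      congr 1
      rw [← hj, zsmul_eq_mul]
    exact hinf (Set.Finite.subset (finite_zpowers.mpr hfin) hsub)

end CircleClosed

def chabautyGens (G : Type*) [Group G] [TopologicalSpace G] : Set (Set (ChabautySpace G)) :=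
  ({S | ∃ K : Set G, IsCompact K ∧ S = {H : ChabautySpace G | (H.1 : Set G) ∩ K = ∅}} ∪
   {S | ∃ U : Set G, IsOpen U ∧ S = {H : ChabautySpace G | ((H.1 : Set G) ∩ U).Nonempty}})

section Main

open Set Subgroup TopologicalSpace

variable (G : Type*) [Group G] [TopologicalSpace G]

lemma chabauty_topology_eq :
    (ChabautySpace.instTopologicalSpace G : TopologicalSpace (ChabautySpace G))
      = TopologicalSpace.generateFrom (chabautyGens G) := rfl

lemma chabauty_isOpen_gen {s : Set (ChabautySpace G)} (hs : s ∈ chabautyGens G) : IsOpen s :=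
  TopologicalSpace.isOpen_generateFrom_of_mem hs

lemma chabauty_basis :
    IsTopologicalBasis ((fun f : Set (Set (ChabautySpace G)) => Set.sInter f) ''
      {f : Set (Set (ChabautySpace G)) | f.Finite ∧ f ⊆ chabautyGens G}) :=
  isTopologicalBasis_of_subbasis (chabauty_topology_eq G)

end Main

section Groups

open Set Subgroup

variable (p k : ℕ)

/-- The ambient group. -/
abbrev Gk (p k : ℕ) : Type := Prufer p × ↥(circleRoots k) × Circle

/-- The approximating discrete subgroups. -/
noncomputable def Dgrp (d m : ℕ) : Subgroup (Gk p k) :=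
  (⊤ : Subgroup (Prufer p)).prod
    (((circleRoots d).comap (circleRoots k).subtype).prod (circleRoots m))

/-- The limit subgroups. -/
noncomputable def Lgrp (d : ℕ) : Subgroup (Gk p k) :=
  (⊤ : Subgroup (Prufer p)).prod
    (((circleRoots d).comap (circleRoots k).subtype).prod (⊤ : Subgroup Circle))

lemma mem_Dgrp {d m : ℕ} {x : Gk p k} :
    x ∈ Dgrp p k d m ↔ (x.2.1 : Circle) ^ d = 1 ∧ x.2.2 ^ m = 1 := by
  rw [Dgrp, Subgroup.mem_prod, Subgroup.mem_prod]
  simp only [Subgroup.mem_top, true_and, and_true, Subgroup.mem_comap]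
  rfl

lemma mem_Lgrp {d : ℕ} {x : Gk p k} :
    x ∈ Lgrp p k d ↔ (x.2.1 : Circle) ^ d = 1 := by
  rw [Lgrp, Subgroup.mem_prod, Subgroup.mem_prod]
  simp only [Subgroup.mem_top, true_and, and_true, Subgroup.mem_comap]
  rfl

lemma circleRoots_isClosed (m : ℕ) : IsClosed (circleRoots m : Set Circle) := by
  have : (circleRoots m : Set Circle) = (fun z : Circle => z ^ m) ⁻¹' {1} := by
    ext z; simp [coe_circleRoots]
  rw [this]
  exact isClosed_singleton.preimage (continuous_pow m)

lemma comap_circleRoots_isClosed (d : ℕ) :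
    IsClosed (((circleRoots d).comap (circleRoots k).subtype : Subgroup ↥(circleRoots k)) :
      Set ↥(circleRoots k)) := by
  rw [Subgroup.coe_comap]
  exact (circleRoots_isClosed d).preimage continuous_subtype_val

lemma Dgrp_isClosed (d m : ℕ) : IsClosed ((Dgrp p k d m : Subgroup (Gk p k)) : Set (Gk p k)) := by
  rw [Dgrp, Subgroup.coe_prod, Subgroup.coe_prod, Subgroup.coe_top]
  exact isClosed_univ.prod ((comap_circleRoots_isClosed k d).prod (circleRoots_isClosed m))

lemma Lgrp_isClosed (d : ℕ) : IsClosed ((Lgrp p k d : Subgroup (Gk p k)) : Set (Gk p k)) := by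
  rw [Lgrp, Subgroup.coe_prod, Subgroup.coe_prod, Subgroup.coe_top, Subgroup.coe_top]
  exact isClosed_univ.prod ((comap_circleRoots_isClosed k d).prod isClosed_univ)

lemma circleRoots_finite {m : ℕ} (hm : 0 < m) : Finite ↥(circleRoots m) :=
  (circle_setOf_pow_finite hm).to_subtype

lemma Dgrp_le_Lgrp (d m : ℕ) : Dgrp p k d m ≤ Lgrp p k d := by
  intro x hx
  exact (mem_Lgrp p k).mpr ((mem_Dgrp p k).mp hx).1

lemma Dgrp_infinite (hp : p.Prime) (d m : ℕ) :
    ((Dgrp p k d m : Subgroup (Gk p k)) : Set (Gk p k)).Infinite := by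
  haveI := prufer_infinite p hp
  refine Set.infinite_of_injective_forall_mem
    (f := fun a : Prufer p => ((a, 1, 1) : Gk p k)) ?_ ?_
  · intro a b hab
    exact congrArg Prod.fst hab
  · intro a
    refine (mem_Dgrp p k).mpr ⟨?_, one_pow m⟩
    rw [OneMemClass.coe_one, one_pow]

lemma Dgrp_discrete (hk : 0 < k) {m : ℕ} (hm : 0 < m) (d : ℕ) :
    DiscreteTopology (Dgrp p k d m) := by
  haveI := circleRoots_finite hk
  set V₀ : Set Circle := ((circleRoots m : Set Circle) \ {1})ᶜ with hV₀
  have hV₀open : IsOpen V₀ :=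
    (((circle_setOf_pow_finite hm).subset Set.diff_subset).isClosed).isOpen_compl
  set U : Set (Gk p k) := {(1 : Prufer p)} ×ˢ ({(1 : ↥(circleRoots k))} ×ˢ V₀) with hU
  have hUopen : IsOpen U := (isOpen_discrete _).prod ((isOpen_discrete _).prod hV₀open)
  apply discreteTopology_of_isOpen_inter hUopen
  ext x
  simp only [Set.mem_inter_iff, Set.mem_prod, Set.mem_singleton_iff, SetLike.mem_coe]
  constructor
  · rintro ⟨⟨hx1, hx2, hx3⟩, hxD⟩
    obtain ⟨-, hm1⟩ := (mem_Dgrp p k).mp hxD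
    have hx22 : x.2.2 = 1 := by
      by_contra hne
      exact hx3 ⟨hm1, hne⟩
    show x = 1
    refine Prod.ext hx1 (Prod.ext hx2 hx22)
  · rintro rfl
    refine ⟨⟨rfl, rfl, ?_⟩, one_mem _⟩
    intro hmem
    exact hmem.2 rfl

end Groups

section Steps

open Set Subgroup TopologicalSpace

variable {p k : ℕ}

/-- An infinite discrete closed subgroup of `G_{p,k}` surjects onto the Prüfer factor. -/
lemma dis_proj_top (hp : p.Prime) (hk : 0 < k) (D : ChabautySpace (Gk p k))
    (hinf : (D.1 : Set (Gk p k)).Infinite) (hdisc : DiscreteTopology D.1) (a : Prufer p) :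
    ∃ c z, ((a, c, z) : Gk p k) ∈ D.1 := by
  haveI := circleRoots_finite hk
  set S : Subgroup (Prufer p) := D.1.map (MonoidHom.fst _ _) with hS
  have hSinf : (S : Set (Prufer p)).Infinite := by
    by_contra hfin
    rw [Set.not_infinite] at hfin
    have hsub : (D.1 : Set (Gk p k)) ⊆ (S : Set (Prufer p)) ×ˢ
        (Set.univ : Set (↥(circleRoots k) × Circle)) := by
      intro x hx
      exact ⟨⟨x, hx, rfl⟩, Set.mem_univ _⟩
    have hcomp : IsCompact ((S : Set (Prufer p)) ×ˢ
        (Set.univ : Set (↥(circleRoots k) × Circle))) :=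
      hfin.isCompact.prod isCompact_univ
    have hDcomp : IsCompact (D.1 : Set (Gk p k)) :=
      hcomp.of_isClosed_subset D.2 hsub
    haveI : CompactSpace ↥(D.1 : Set (Gk p k)) := isCompact_iff_compactSpace.mp hDcomp
    haveI : Finite ↥(D.1 : Set (Gk p k)) := finite_of_compact_of_discrete
    exact hinf (Set.finite_coe_iff.mp this)
  have hStop : S = ⊤ := prufer_subgroup_infinite_eq_top hp S hSinf
  have haS : a ∈ S := hStop ▸ Subgroup.mem_top a
  obtain ⟨x, hx, hxa⟩ := Subgroup.mem_map.mp haS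
  refine ⟨x.2.1, x.2.2, ?_⟩
  have : ((a, x.2.1, x.2.2) : Gk p k) = x := by
    rw [← hxa]
    rfl
  rw [this]
  exact hx

end Steps

section Classify

open Set Subgroup TopologicalSpace

variable {p k : ℕ}

/-- Classification of non-discrete closed subgroups that surject onto the Prüfer factor. -/
lemma hard_classify (hp : p.Prime) (hk : 0 < k) (H : ChabautySpace (Gk p k))
    (hsur : ∀ a : Prufer p, ∃ c z, ((a, c, z) : Gk p k) ∈ H.1)
    (hnd : ¬DiscreteTopology H.1) :
    ∃ d : ℕ, 0 < d ∧ d ∣ k ∧ H.1 = Lgrp p k d := by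
  haveI := circleRoots_finite hk
  -- the circle fibre over the identity
  set Nset : Set Circle := {z : Circle | ((1, 1, z) : Gk p k) ∈ H.1} with hNset
  have hNmul : ∀ z w, z ∈ Nset → w ∈ Nset → z * w ∈ Nset := by
    intro z w hz hw
    have := H.1.mul_mem hz hw
    simpa [Prod.mk_mul_mk, hNset] using this
  have hNinv : ∀ z, z ∈ Nset → z⁻¹ ∈ Nset := by
    intro z hz
    have := H.1.inv_mem hz
    simpa [Prod.mk_mul_mk, hNset] using this
  set Ngrp : Subgroup Circle :=
    { carrier := Nset
      one_mem' := by
        show ((1, 1, 1) : Gk p k) ∈ H.1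
        exact H.1.one_mem
      mul_mem' := fun ha hb => hNmul _ _ ha hb
      inv_mem' := fun ha => hNinv _ ha } with hNgrp
  have hNclosed : IsClosed Nset := by
    have : Nset = (fun z : Circle => ((1, 1, z) : Gk p k)) ⁻¹' (H.1 : Set (Gk p k)) := rfl
    rw [this]
    exact H.2.preimage (Continuous.prodMk continuous_const
      (Continuous.prodMk continuous_const continuous_id))
  have hNinf : Nset.Infinite := by
    by_contra hfin
    rw [Set.not_infinite] at hfin
    apply hnd
    set V : Set Circle := (Nset \ {1})ᶜ with hV
    have hVopen : IsOpen V := ((hfin.subset Set.diff_subset).isClosed).isOpen_compl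
    set U : Set (Gk p k) := {(1 : Prufer p)} ×ˢ ({(1 : ↥(circleRoots k))} ×ˢ V) with hU
    have hUopen : IsOpen U := (isOpen_discrete _).prod ((isOpen_discrete _).prod hVopen)
    apply discreteTopology_of_isOpen_inter hUopen
    ext x
    simp only [Set.mem_inter_iff, Set.mem_prod, Set.mem_singleton_iff, SetLike.mem_coe]
    constructor
    · rintro ⟨⟨hx1, hx2, hx3⟩, hxH⟩
      have hxN : x.2.2 ∈ Nset := by
        show ((1, 1, x.2.2) : Gk p k) ∈ H.1
        have : ((1, 1, x.2.2) : Gk p k) = x := by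
          rw [← hx1, ← hx2]
        rw [this]
        exact hxH
      have hx22 : x.2.2 = 1 := by
        by_contra hne
        exact hx3 ⟨hxN, hne⟩
      show x = 1
      exact Prod.ext hx1 (Prod.ext hx2 hx22)
    · rintro rfl
      refine ⟨⟨rfl, rfl, fun hmem => hmem.2 rfl⟩, one_mem _⟩
  have hNtop : Ngrp = ⊤ := circle_closed_subgroup_infinite_eq_top Ngrp hNclosed hNinf
  have hβ : ∀ z : Circle, ((1, 1, z) : Gk p k) ∈ H.1 := by
    intro z
    have : z ∈ Ngrp := hNtop ▸ Subgroup.mem_top z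
    exact this
  -- every element of the Prüfer factor, with trivial other coordinates, lies in H
  have hγ : ∀ a : Prufer p, ((a, 1, 1) : Gk p k) ∈ H.1 := by
    intro a
    obtain ⟨b, hb⟩ := prufer_divisible hp hk a
    obtain ⟨c, z, hcz⟩ := hsur b
    have hpow := H.1.pow_mem hcz k
    have hck : c ^ k = 1 := by
      apply Subtype.ext
      rw [SubmonoidClass.coe_pow, OneMemClass.coe_one]
      exact c.2
    have heq : ((b, c, z) : Gk p k) ^ k = ((a, 1, z ^ k) : Gk p k) := by
      rw [Prod.pow_mk, Prod.pow_mk, hb, hck]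
    rw [heq] at hpow
    have := H.1.mul_mem hpow (hβ (z ^ k)⁻¹)
    simpa [Prod.mk_mul_mk] using this
  -- the middle section subgroup
  set Sgrp : Subgroup ↥(circleRoots k) :=
    { carrier := {c : ↥(circleRoots k) | ((1, c, 1) : Gk p k) ∈ H.1}
      one_mem' := H.1.one_mem
      mul_mem' := by
        intro a b ha hb
        have := H.1.mul_mem ha hb
        simpa [Prod.mk_mul_mk] using this
      inv_mem' := by
        intro a ha
        have := H.1.inv_mem ha
        simpa [Prod.mk_mul_mk] using this } with hSgrp
  have hmemS : ∀ x : Gk p k, x ∈ H.1 ↔ x.2.1 ∈ Sgrp := by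
    intro x
    constructor
    · intro hx
      have h1 : ((x.1, x.2.1, x.2.2) : Gk p k) ∈ H.1 := by
        have : ((x.1, x.2.1, x.2.2) : Gk p k) = x := rfl
        rw [this]; exact hx
      have h2 := H.1.mul_mem (H.1.inv_mem (hγ x.1)) h1
      have h3 : ((x.1, 1, 1) : Gk p k)⁻¹ * (x.1, x.2.1, x.2.2) = ((1, x.2.1, x.2.2) : Gk p k) := by
        simp [Prod.mk_mul_mk, Prod.mul_def, Prod.ext_iff]
      rw [h3] at h2
      have h4 := H.1.mul_mem h2 (hβ (x.2.2)⁻¹)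
      have h5 : ((1, x.2.1, x.2.2) : Gk p k) * (1, 1, (x.2.2)⁻¹) = ((1, x.2.1, 1) : Gk p k) := by
        simp [Prod.mk_mul_mk, Prod.mul_def, Prod.ext_iff]
      rw [h5] at h4
      exact h4
    · intro hx
      have h1 := H.1.mul_mem (hγ x.1) (H.1.mul_mem (hx : ((1, x.2.1, 1) : Gk p k) ∈ H.1)
        (hβ x.2.2))
      have h2 : ((x.1, 1, 1) : Gk p k) * (((1, x.2.1, 1) : Gk p k) * (1, 1, x.2.2)) = x := by
        simp [Prod.mk_mul_mk, Prod.mul_def, Prod.ext_iff]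
      rw [h2] at h1
      exact h1
  -- classify Sgrp
  set S' : Subgroup Circle := Sgrp.map (circleRoots k).subtype with hS'
  have hS'fin : (S' : Set Circle).Finite := by
    rw [hS', Subgroup.coe_map]
    exact (Set.toFinite (Sgrp : Set ↥(circleRoots k))).image _
  obtain ⟨hdpos, hS'eq⟩ := subgroup_circle_finite_eq S' hS'fin
  set d := Nat.card S' with hd
  have hdk : d ∣ k := by
    have hle : S' ≤ circleRoots k := by
      rintro z ⟨c, hc, rfl⟩
      exact c.2
    have := Subgroup.card_dvd_of_le hle
    rwa [show Nat.card ↥(circleRoots k) = k from by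
      have h0 : Nat.card ↥(circleRoots k)
          = Nat.card ↥((circleRoots k : Subgroup Circle) : Set Circle) := rfl
      rw [h0, Nat.card_coe_set_eq, coe_circleRoots, circle_setOf_pow_ncard hk]] at this
  refine ⟨d, hdpos, hdk, ?_⟩
  ext x
  rw [hmemS, mem_Lgrp]
  constructor
  · intro hx
    have : (x.2.1 : Circle) ∈ S' := ⟨x.2.1, hx, rfl⟩
    rw [hS'eq] at this
    exact this
  · intro hx
    have hmem : (x.2.1 : Circle) ∈ S' := by
      rw [hS'eq]
      exact hx
    obtain ⟨c, hc, hceq⟩ := hmem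
    have : c = x.2.1 := Subtype.ext hceq
    rwa [this] at hc

end Classify

section Forward

open Set Subgroup TopologicalSpace

variable {p k : ℕ}

/-- The set of infinite discrete (closed) subgroups. -/
def disSet (p k : ℕ) : Set (ChabautySpace (Gk p k)) :=
  {H : ChabautySpace (Gk p k) | (H.1 : Set (Gk p k)).Infinite ∧ DiscreteTopology H.1}

lemma L_mem_closure (hp : p.Prime) (hk : 0 < k) {d : ℕ} (hd0 : 0 < d)
    (H : ChabautySpace (Gk p k)) (hH : H.1 = Lgrp p k d) :
    H ∈ closure (disSet p k) := by
  classical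
  rw [(chabauty_basis (Gk p k)).mem_closure_iff]
  rintro o ⟨F, ⟨hFfin, hFsub⟩, rfl⟩ hHo
  have key : ∀ f ∈ F, ∃ m : ℕ, 0 < m ∧ ∀ m' : ℕ, 0 < m' → m ∣ m' →
      (⟨Dgrp p k d m', Dgrp_isClosed p k d m'⟩ : ChabautySpace (Gk p k)) ∈ f := by
    intro f hf
    rcases hFsub hf with ⟨K, hK, rfl⟩ | ⟨U, hU, rfl⟩
    · refine ⟨1, one_pos, ?_⟩
      intro m' hm' hdvd
      have hHf : (H.1 : Set (Gk p k)) ∩ K = ∅ := Set.mem_sInter.mp hHo _ hf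
      show ((Dgrp p k d m' : Subgroup (Gk p k)) : Set (Gk p k)) ∩ K = ∅
      apply Set.eq_empty_of_subset_empty
      rw [← hHf]
      apply Set.inter_subset_inter_left
      intro x hx
      rw [hH]
      exact Dgrp_le_Lgrp p k d m' hx
    · obtain ⟨x, hxH, hxU⟩ := Set.mem_sInter.mp hHo _ hf
      have hxd : (x.2.1 : Circle) ^ d = 1 := by
        rw [hH] at hxH
        exact (mem_Lgrp p k).mp hxH
      set ι : Circle → Gk p k := fun w => (x.1, x.2.1, w) with hι
      have hι_cont : Continuous ι :=
        continuous_const.prodMk (continuous_const.prodMk continuous_id)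
      have hV : IsOpen (ι ⁻¹' U) := hU.preimage hι_cont
      have hzV : x.2.2 ∈ ι ⁻¹' U := by
        show ι x.2.2 ∈ U
        have : ι x.2.2 = x := rfl
        rw [this]
        exact hxU
      obtain ⟨m, hm, w, hwV, hwm⟩ := circle_exists_torsion_near hV hzV
      refine ⟨m, hm, ?_⟩
      intro m' hm' hdvd
      show (((Dgrp p k d m' : Subgroup (Gk p k)) : Set (Gk p k)) ∩ U).Nonempty
      refine ⟨ι w, ?_, hwV⟩
      refine (mem_Dgrp p k).mpr ⟨hxd, ?_⟩
      obtain ⟨j, rfl⟩ := hdvd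
      show w ^ (m * j) = 1
      rw [pow_mul, hwm, one_pow]
  choose! g hg1 hg2 using key
  set Fs := hFfin.toFinset with hFs
  set M := ∏ f ∈ Fs, g f with hM
  have hMpos : 0 < M := by
    apply Finset.prod_pos
    intro f hf
    exact hg1 f (hFfin.mem_toFinset.mp hf)
  have hMdvd : ∀ f ∈ F, g f ∣ M :=
    fun f hf => Finset.dvd_prod_of_mem g (hFfin.mem_toFinset.mpr hf)
  refine ⟨⟨Dgrp p k d M, Dgrp_isClosed p k d M⟩, ?_, ?_, ?_⟩
  · exact Set.mem_sInter.mpr fun f hf => hg2 f hf M hMpos (hMdvd f hf)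
  · exact Dgrp_infinite p k hp d M
  · exact Dgrp_discrete p k hk hMpos d

end Forward

/-- In `C(G_{p,k})` for `G_{p,k} = C_{p^∞} × C_k × 𝕋`, the closure of the set `C^dis` of
infinite discrete closed subgroups is the union of `C^dis` with the `d(k)` subgroups
`C_{p^∞} × C_d × 𝕋`, for `d` ranging over the positive divisors of `k` (here `C_d ≤ C_k`
is the subgroup of `d`-th roots of unity). -/
theorem chabauty_closure_of_infinite_discrete (p k : ℕ) (hp : p.Prime) (hk : 1 ≤ k) :
    closure {H : ChabautySpace (Prufer p × ↥(circleRoots k) × Circle) |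
        (H.1 : Set (Prufer p × ↥(circleRoots k) × Circle)).Infinite ∧
        DiscreteTopology H.1} =
      {H : ChabautySpace (Prufer p × ↥(circleRoots k) × Circle) |
        (H.1 : Set (Prufer p × ↥(circleRoots k) × Circle)).Infinite ∧
        DiscreteTopology H.1} ∪
      {H : ChabautySpace (Prufer p × ↥(circleRoots k) × Circle) |
        ∃ d : ℕ, 0 < d ∧ d ∣ k ∧
          H.1 = (⊤ : Subgroup (Prufer p)).prod
            (((circleRoots d).comap (circleRoots k).subtype).prod (⊤ : Subgroup Circle))} := by
  have hk0 : 0 < k := hk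
  haveI := circleRoots_finite hk0
  haveI := prufer_infinite p hp
  apply Set.Subset.antisymm
  · intro H hH
    by_cases hA : H ∈ disSet p k
    · exact Or.inl hA
    · right
      have hsur : ∀ a : Prufer p, ∃ c z, ((a, c, z) : Gk p k) ∈ H.1 := by
        intro a
        by_contra hcon
        push_neg at hcon
        set K : Set (Gk p k) := {a} ×ˢ (Set.univ : Set (↥(circleRoots k) × Circle)) with hKdef
        have hKcomp : IsCompact K := isCompact_singleton.prod isCompact_univ
        set O : Set (ChabautySpace (Gk p k)) :=
          {H' : ChabautySpace (Gk p k) | (H'.1 : Set (Gk p k)) ∩ K = ∅} with hOdef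
        have hOopen : IsOpen O := chabauty_isOpen_gen _ (Or.inl ⟨K, hKcomp, rfl⟩)
        have hHO : H ∈ O := by
          show (H.1 : Set (Gk p k)) ∩ K = ∅
          apply Set.eq_empty_iff_forall_notMem.mpr
          rintro x ⟨hxH, hxK⟩
          have hx1 : x.1 = a := hxK.1
          apply hcon x.2.1 x.2.2
          have hxeq : ((a, x.2.1, x.2.2) : Gk p k) = x := by
            rw [← hx1]
          rw [hxeq]
          exact hxH
        obtain ⟨D, hDO, hDA⟩ := mem_closure_iff.mp hH O hOopen hHO
        obtain ⟨c, z, hcz⟩ := dis_proj_top hp hk0 D hDA.1 hDA.2 a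
        have hmem : ((a, c, z) : Gk p k) ∈ (D.1 : Set (Gk p k)) ∩ K :=
          ⟨hcz, Set.mem_prod.mpr ⟨rfl, Set.mem_univ _⟩⟩
        have hDO' : (D.1 : Set (Gk p k)) ∩ K = ∅ := hDO
        rw [hDO'] at hmem
        exact hmem
      have hnd : ¬DiscreteTopology H.1 := by
        intro hdisc
        apply hA
        have hinf : (H.1 : Set (Gk p k)).Infinite := by
          by_contra hfin
          rw [Set.not_infinite] at hfin
          have himg : (Prod.fst '' (H.1 : Set (Gk p k))) = Set.univ :=
            Set.eq_univ_of_forall (fun a => by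
              obtain ⟨c, z, hcz⟩ := hsur a
              exact ⟨(a, c, z), hcz, rfl⟩)
          exact Set.infinite_univ (α := Prufer p) (himg ▸ hfin.image Prod.fst)
        exact ⟨hinf, hdisc⟩
      obtain ⟨d, hd0, hdk, hHL⟩ := hard_classify hp hk0 H hsur hnd
      exact ⟨d, hd0, hdk, hHL⟩
  · rintro H (hA | ⟨d, hd0, hdk, hHL⟩)
    · exact subset_closure hA
    · exact L_mem_closure hp hk0 hd0 H hHL
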